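/- (Averaging of the raw measurement recovers the function value.) Let Q : ℝⁿ → ℝ be continuously differentiable with ℓ-Lipschitz gradient (ℓ > 0). Then for every θ̂ ∈ ℝⁿ and every a > 0: |(1/T)·∫₀ᵀ Q(θ̂ + S(t)) dt − Q(θ̂)| ≤ (n·ℓ·a²)/2. In particular, the T-average of the raw measurement equals Q(θ̂) up to an error of order O(a²). -/

import Mathlib

open scoped RealInnerProductSpace
open Set Filter

/-- The dither (perturbation) signal `S(t) = a·(sin(ω₁t), …, sin(ωₙt))`. -/
noncomputable def dither {n : ℕ} (ω : Fin n → ℝ) (a t : ℝ) : EuclideanSpace ℝ (Fin n) :=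
  WithLp.toLp 2 (fun i => a * Real.sin (ω i * t))

/-- The demodulation signal `M(t) = (2/a)·(sin(ω₁t), …, sin(ωₙt))`. -/
noncomputable def demod {n : ℕ} (ω : Fin n → ℝ) (a t : ℝ) : EuclideanSpace ℝ (Fin n) :=
  WithLp.toLp 2 (fun i => (2 / a) * Real.sin (ω i * t))

lemma fderiv_eq_toDual_gradient {n : ℕ} (Q : EuclideanSpace ℝ (Fin n) → ℝ)
    (z : EuclideanSpace ℝ (Fin n)) :
    fderiv ℝ Q z = InnerProductSpace.toDual ℝ _ (gradient Q z) := by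
  rw [gradient, LinearIsometryEquiv.apply_symm_apply]

lemma taylor_bound {n : ℕ} (Q : EuclideanSpace ℝ (Fin n) → ℝ) (ℓ : ℝ)
    (hQ : ContDiff ℝ 1 Q)
    (hQlip : ∀ x y, ‖gradient Q x - gradient Q y‖ ≤ ℓ * ‖x - y‖)
    (hℓ0 : 0 ≤ ℓ) (x v : EuclideanSpace ℝ (Fin n)) :
    |Q (x + v) - Q x - ⟪gradient Q x, v⟫| ≤ ℓ * ‖v‖ ^ 2 := by
  have hseg : ∀ z ∈ segment ℝ x (x + v), ‖z - x‖ ≤ ‖v‖ := by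
    intro z hz
    obtain ⟨b1, b2, hb1, hb2, hsum, hz⟩ := hz
    have : z - x = b2 • v := by
      rw [← hz]
      have h1 : b1 = 1 - b2 := by linarith
      rw [h1]
      module
    rw [this, norm_smul, Real.norm_eq_abs, abs_of_nonneg hb2]
    nlinarith [norm_nonneg v]
  have key :=
    (convex_segment x (x + v)).norm_image_sub_le_of_norm_fderiv_le'
      (f := Q) (φ := fderiv ℝ Q x) (C := ℓ * ‖v‖)
      (fun z _ => (hQ.differentiable one_ne_zero).differentiableAt)
      (fun z hz => by
        rw [fderiv_eq_toDual_gradient, fderiv_eq_toDual_gradient, ← map_sub,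
          LinearIsometryEquiv.norm_map]
        calc ‖gradient Q z - gradient Q x‖ ≤ ℓ * ‖z - x‖ := hQlip z x
          _ ≤ ℓ * ‖v‖ := mul_le_mul_of_nonneg_left (hseg z hz) hℓ0)
      (left_mem_segment ℝ x (x + v)) (right_mem_segment ℝ x (x + v))
  have h1 : (fderiv ℝ Q x) (x + v - x) = ⟪gradient Q x, v⟫ := by
    rw [fderiv_eq_toDual_gradient, InnerProductSpace.toDual_apply_apply, add_sub_cancel_left]
  rw [h1, add_sub_cancel_left] at key
  calc |Q (x + v) - Q x - ⟪gradient Q x, v⟫| ≤ ℓ * ‖v‖ * ‖v‖ := key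
    _ = ℓ * ‖v‖ ^ 2 := by ring

lemma integral_sin_mul_eq_zero (c T : ℝ) (hc : c ≠ 0) (m : ℕ)
    (hm : c * T = (m : ℝ) * (2 * Real.pi)) :
    ∫ t in (0:ℝ)..T, Real.sin (c * t) = 0 := by
  rw [intervalIntegral.integral_comp_mul_left (fun x => Real.sin x) hc]
  rw [mul_zero, integral_sin, hm, Real.cos_nat_mul_two_pi, Real.cos_zero]
  simp

lemma integral_sin_sq_mul (c T : ℝ) (hc : c ≠ 0) (m : ℕ)
    (hm : c * T = (m : ℝ) * (2 * Real.pi)) :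
    ∫ t in (0:ℝ)..T, Real.sin (c * t) ^ 2 = T / 2 := by
  rw [intervalIntegral.integral_comp_mul_left (fun x => Real.sin x ^ 2) hc]
  rw [mul_zero, integral_sin_sq]
  have hs : Real.sin (c * T) = 0 := by
    rw [hm]
    have : (m : ℝ) * (2 * Real.pi) = ((2 * m : ℕ) : ℝ) * Real.pi := by push_cast; ring
    rw [this, Real.sin_nat_mul_pi]
  rw [hs]
  field_simp
  simp only [smul_eq_mul, Real.sin_zero, zero_mul, sub_zero, zero_sub, sub_self, zero_add, add_zero]
  field_simp

/-- averaging of the raw measurement recovers the function value: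
for Q of class C¹ with ℓ-Lipschitz gradient,
`|(1/T)·∫₀ᵀ Q(θ̂+S(t)) dt − Q(θ̂)| ≤ n·ℓ·a²/2`. -/
theorem stmt14 {n : ℕ} (hn : 1 ≤ n) (ω : Fin n → ℝ) (T : ℝ)
    (hω : ∀ i, 0 < ω i) (hωinj : Function.Injective ω)
    (hωrat : ∀ i j, ∃ q : ℚ, ω i = (q : ℝ) * ω j)
    (hT : 0 < T) (hTper : ∀ i, ∃ m : ℕ, 0 < m ∧ ω i * T = (m : ℝ) * (2 * Real.pi))
    (Q : EuclideanSpace ℝ (Fin n) → ℝ) (ℓ : ℝ) (hℓ : 0 < ℓ)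
    (hQ : ContDiff ℝ 1 Q)
    (hQlip : ∀ x y, ‖gradient Q x - gradient Q y‖ ≤ ℓ * ‖x - y‖) :
    ∀ (θhat : EuclideanSpace ℝ (Fin n)) (a : ℝ), 0 < a →
      |(1 / T) * (∫ t in (0:ℝ)..T, Q (θhat + dither ω a t)) - Q θhat| ≤
        n * ℓ * a ^ 2 / 2 := by
  intro θhat a ha
  set g := gradient Q θhat with hg
  -- continuity facts
  have hSc : Continuous fun t : ℝ => dither ω a t := by
    refine (PiLp.continuous_toLp 2 _).comp ?_
    apply continuous_pi
    intro i
    exact continuous_const.mul (Real.continuous_sin.comp (continuous_const.mul continuous_id))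
  have hfc : Continuous fun t : ℝ => Q (θhat + dither ω a t) :=
    hQ.continuous.comp (continuous_const.add hSc)
  have hic : Continuous fun t : ℝ => ⟪g, dither ω a t⟫ :=
    continuous_const.inner hSc
  have hrc : Continuous fun t : ℝ => Q (θhat + dither ω a t) - Q θhat - ⟪g, dither ω a t⟫ :=
    (hfc.sub continuous_const).sub hic
  have hbc : Continuous fun t : ℝ => ℓ * ‖dither ω a t‖ ^ 2 :=
    continuous_const.mul (hSc.norm.pow 2)
  -- the inner product integrates to zero
  have hinner : ∫ t in (0:ℝ)..T, ⟪g, dither ω a t⟫ = 0 := by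
    have heq : ∀ t : ℝ, ⟪g, dither ω a t⟫ = ∑ i, g i * (a * Real.sin (ω i * t)) := by
      intro t
      rw [PiLp.inner_apply]
      simp only [Real.inner_apply]
      rfl
    simp_rw [heq]
    rw [intervalIntegral.integral_finset_sum]
    · apply Finset.sum_eq_zero
      intro i _
      obtain ⟨m, hm0, hm⟩ := hTper i
      have : ∀ t : ℝ, g i * (a * Real.sin (ω i * t)) = (g i * a) * Real.sin (ω i * t) := by
        intro t; ring
      simp_rw [this]
      rw [intervalIntegral.integral_const_mul, integral_sin_mul_eq_zero (ω i) T (hω i).ne' m hm]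
      simp
    · intro i _
      exact (continuous_const.mul (continuous_const.mul
        (Real.continuous_sin.comp (continuous_const.mul continuous_id)))).intervalIntegrable _ _
  -- pointwise Taylor bound
  have hptw : ∀ t : ℝ, |Q (θhat + dither ω a t) - Q θhat - ⟪g, dither ω a t⟫| ≤
      ℓ * ‖dither ω a t‖ ^ 2 := fun t =>
    taylor_bound Q ℓ hQ hQlip hℓ.le θhat (dither ω a t)
  -- the integral of the bound
  have hnorm_sq : ∀ t : ℝ, ‖dither ω a t‖ ^ 2 = ∑ i, (a * Real.sin (ω i * t)) ^ 2 := by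
    intro t
    rw [EuclideanSpace.norm_eq, Real.sq_sqrt (Finset.sum_nonneg fun i _ => sq_nonneg _)]
    congr 1
    ext i
    rw [Real.norm_eq_abs, sq_abs]
    rfl
  have hbound_int : ∫ t in (0:ℝ)..T, ℓ * ‖dither ω a t‖ ^ 2 = ℓ * a ^ 2 * n * (T / 2) := by
    simp_rw [hnorm_sq]
    rw [intervalIntegral.integral_const_mul, intervalIntegral.integral_finset_sum]
    · have : ∀ i ∈ Finset.univ, (∫ t in (0:ℝ)..T, (a * Real.sin (ω i * t)) ^ 2) =
          a ^ 2 * (T / 2) := by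
        intro i _
        obtain ⟨m, hm0, hm⟩ := hTper i
        have h2 : ∀ t : ℝ, (a * Real.sin (ω i * t)) ^ 2 = a ^ 2 * Real.sin (ω i * t) ^ 2 := by
          intro t; ring
        simp_rw [h2]
        rw [intervalIntegral.integral_const_mul, integral_sin_sq_mul (ω i) T (hω i).ne' m hm]
      rw [Finset.sum_congr rfl this, Finset.sum_const, Finset.card_univ, Fintype.card_fin,
        nsmul_eq_mul]
      ring
    · intro i _
      exact ((continuous_const.mul (Real.continuous_sin.comp (continuous_const.mul continuous_id))).pow 2
        ).intervalIntegrable _ _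
  -- main estimate
  have hsplit : ∫ t in (0:ℝ)..T, Q (θhat + dither ω a t) =
      (∫ t in (0:ℝ)..T, (Q (θhat + dither ω a t) - Q θhat - ⟪g, dither ω a t⟫)) + T * Q θhat := by
    have : ∀ t : ℝ, Q (θhat + dither ω a t) =
        (Q (θhat + dither ω a t) - Q θhat - ⟪g, dither ω a t⟫) + ⟪g, dither ω a t⟫ + Q θhat := by
      intro t; ring
    rw [intervalIntegral.integral_congr (g := fun t =>
      (Q (θhat + dither ω a t) - Q θhat - ⟪g, dither ω a t⟫) + ⟪g, dither ω a t⟫ + Q θhat)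
      (fun t _ => this t)]
    rw [intervalIntegral.integral_add, intervalIntegral.integral_add, hinner,
      intervalIntegral.integral_const]
    · simp [smul_eq_mul]
    · exact hrc.intervalIntegrable _ _
    · exact hic.intervalIntegrable _ _
    · exact (hrc.add hic).intervalIntegrable _ _
    · exact continuous_const.intervalIntegrable _ _
  have habs : |∫ t in (0:ℝ)..T, (Q (θhat + dither ω a t) - Q θhat - ⟪g, dither ω a t⟫)| ≤
      ℓ * a ^ 2 * n * (T / 2) := by
    rw [← hbound_int]
    calc |∫ t in (0:ℝ)..T, (Q (θhat + dither ω a t) - Q θhat - ⟪g, dither ω a t⟫)|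
        ≤ ∫ t in (0:ℝ)..T, |Q (θhat + dither ω a t) - Q θhat - ⟪g, dither ω a t⟫| := by
          simpa using intervalIntegral.norm_integral_le_integral_norm
            (f := fun t => Q (θhat + dither ω a t) - Q θhat - ⟪g, dither ω a t⟫) hT.le
      _ ≤ ∫ t in (0:ℝ)..T, ℓ * ‖dither ω a t‖ ^ 2 := by
          apply intervalIntegral.integral_mono_on hT.le
          · exact hrc.abs.intervalIntegrable _ _
          · exact hbc.intervalIntegrable _ _
          · intro t _; exact hptw t
  rw [hsplit]
  have hT' : T ≠ 0 := hT.ne'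
  have : (1 / T) * ((∫ t in (0:ℝ)..T, (Q (θhat + dither ω a t) - Q θhat - ⟪g, dither ω a t⟫))
      + T * Q θhat) - Q θhat =
      (1 / T) * (∫ t in (0:ℝ)..T, (Q (θhat + dither ω a t) - Q θhat - ⟪g, dither ω a t⟫)) := by
    field_simp
    ring
  rw [this, abs_mul, abs_of_pos (by positivity : (0:ℝ) < 1 / T)]
  calc (1 / T) * |∫ t in (0:ℝ)..T, (Q (θhat + dither ω a t) - Q θhat - ⟪g, dither ω a t⟫)|
      ≤ (1 / T) * (ℓ * a ^ 2 * n * (T / 2)) := by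
        apply mul_le_mul_of_nonneg_left habs (by positivity)
    _ = n * ℓ * a ^ 2 / 2 := by field_simp
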